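/- Suboptimality bound for the composite objective along TOS points: Let E be a real inner product space, let f : E → ℝ be convex and differentiable with L_f-Lipschitz gradient (L_f > 0), let g : E → ℝ be convex, and let h : E → ℝ be convex and differentiable with L_h-Lipschitz gradient (L_h > 0). Set F = f + g + h. Then for all x_A, x_B, x* ∈ E and every subgradient p_g of g at x_B: F(x_B) − F(x*) ≤ ⟪∇f(x_A) + p_g + ∇h(x_B), x_B − x*⟫ + (L_f/2) ‖x_B − x_A‖² − (1/(2L_h)) ‖∇h(x_B) − ∇h(x*)‖². -/

import Mathlib

open scoped RealInnerProductSpace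

section Aux

variable {E : Type*} [NormedAddCommGroup E] [InnerProductSpace ℝ E]

lemma line_hasDerivAt (f : E → ℝ) (grad : E → E)
    (hdiff : ∀ x, HasFDerivAt f (InnerProductSpace.toDualMap ℝ E (grad x)) x)
    (x v : E) (t : ℝ) :
    HasDerivAt (fun s : ℝ => f (x + s • v)) ⟪grad (x + t • v), v⟫ t := by
  have hline : HasDerivAt (fun s : ℝ => x + s • v) v t := by
    simpa using ((hasDerivAt_id t).smul_const v).const_add x
  have := (hdiff (x + t • v)).comp_hasDerivAt t hline
  simp at this; exact this

lemma grad_ineq (f : E → ℝ) (grad : E → E) (hf : ConvexOn ℝ Set.univ f)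
    (hdiff : ∀ x, HasFDerivAt f (InnerProductSpace.toDualMap ℝ E (grad x)) x)
    (x y : E) : f x + ⟪grad x, y - x⟫ ≤ f y := by
  set v := y - x with hv
  have hconv : ConvexOn ℝ Set.univ (fun s : ℝ => f (x + s • v)) := by
    have := hf.comp_affineMap
      (AffineMap.mk (fun s : ℝ => x + s • v)
        { toFun := fun s : ℝ => s • v,
          map_add' := by intro a b; simp [add_smul],
          map_smul' := by intro a b; simp [smul_smul] }
        (by intro p w; simp [add_smul]; abel))
    have h2 : (fun s : ℝ => x + s • v) ⁻¹' Set.univ = Set.univ := by simp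
    simp [h2, Function.comp] at this; exact this
  have hd : HasDerivAt (fun s : ℝ => f (x + s • v)) ⟪grad x, v⟫ 0 := by
    simpa using line_hasDerivAt f grad hdiff x v 0
  have := hconv.le_slope_of_hasDerivAt (Set.mem_univ (0:ℝ)) (Set.mem_univ (1:ℝ))
    one_pos hd
  rw [slope_def_field] at this
  norm_num at this
  have h1 : x + v = y := by simp [hv]
  rw [h1] at this
  linarith

lemma descent_lemma (f : E → ℝ) (grad : E → E) (L : ℝ) (hL : 0 < L)
    (hdiff : ∀ x, HasFDerivAt f (InnerProductSpace.toDualMap ℝ E (grad x)) x)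
    (hlip : ∀ x y, ‖grad x - grad y‖ ≤ L * ‖x - y‖)
    (x y : E) : f y ≤ f x + ⟪grad x, y - x⟫ + L / 2 * ‖y - x‖ ^ 2 := by
  set v := y - x with hv
  have hgc : Continuous grad := by
    have : LipschitzWith (Real.toNNReal L) grad := by
      apply LipschitzWith.of_dist_le_mul
      intro a b
      simpa [dist_eq_norm, Real.coe_toNNReal _ hL.le] using hlip a b
    exact this.continuous
  have hcont : Continuous fun t : ℝ => ⟪grad (x + t • v), v⟫ := by
    exact (Continuous.inner (hgc.comp (by continuity)) continuous_const)
  have hftc : ∫ t in (0:ℝ)..1, ⟪grad (x + t • v), v⟫ = f y - f x := by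
    have := intervalIntegral.integral_eq_sub_of_hasDerivAt
      (f := fun s : ℝ => f (x + s • v)) (f' := fun t => ⟪grad (x + t • v), v⟫)
      (a := 0) (b := 1)
      (fun t _ => line_hasDerivAt f grad hdiff x v t)
      (hcont.intervalIntegrable 0 1)
    simpa [hv] using this
  have hmono : ∫ t in (0:ℝ)..1, (⟪grad (x + t • v), v⟫ - ⟪grad x, v⟫) ≤
      ∫ t in (0:ℝ)..1, L * t * ‖v‖ ^ 2 := by
    apply intervalIntegral.integral_mono_on zero_le_one
    · exact (hcont.sub continuous_const).intervalIntegrable 0 1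
    · exact (by continuity : Continuous fun t : ℝ => L * t * ‖v‖ ^ 2).intervalIntegrable 0 1
    · intro t ht
      have h1 : ⟪grad (x + t • v), v⟫ - ⟪grad x, v⟫ = ⟪grad (x + t • v) - grad x, v⟫ := by
        rw [inner_sub_left]
      rw [h1]
      calc ⟪grad (x + t • v) - grad x, v⟫ ≤ ‖grad (x + t • v) - grad x‖ * ‖v‖ :=
            real_inner_le_norm _ _
        _ ≤ (L * ‖(x + t • v) - x‖) * ‖v‖ := by
            exact mul_le_mul_of_nonneg_right (hlip _ _) (norm_nonneg _)
        _ = L * t * ‖v‖ ^ 2 := by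
            rw [add_sub_cancel_left, norm_smul, Real.norm_eq_abs, abs_of_nonneg ht.1]
            ring
  have hrhs : ∫ t in (0:ℝ)..1, L * t * ‖v‖ ^ 2 = L / 2 * ‖v‖ ^ 2 := by
    have : ∫ t in (0:ℝ)..1, L * t * ‖v‖ ^ 2
        = (L * ‖v‖ ^ 2) * ∫ t in (0:ℝ)..1, t := by
      rw [← intervalIntegral.integral_const_mul]
      congr 1; ext t; ring
    rw [this, integral_id]; ring
  have hlhs : ∫ t in (0:ℝ)..1, (⟪grad (x + t • v), v⟫ - ⟪grad x, v⟫)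
      = (f y - f x) - ⟪grad x, v⟫ := by
    rw [intervalIntegral.integral_sub (hcont.intervalIntegrable 0 1)
      (intervalIntegrable_const), hftc]
    simp
  rw [hlhs, hrhs] at hmono
  linarith

lemma cocoercive_lower (f : E → ℝ) (grad : E → E) (L : ℝ) (hL : 0 < L)
    (hf : ConvexOn ℝ Set.univ f)
    (hdiff : ∀ x, HasFDerivAt f (InnerProductSpace.toDualMap ℝ E (grad x)) x)
    (hlip : ∀ x y, ‖grad x - grad y‖ ≤ L * ‖x - y‖)
    (x y : E) :
    f x + ⟪grad x, y - x⟫ + 1 / (2 * L) * ‖grad y - grad x‖ ^ 2 ≤ f y := by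
  -- φ w = f w - ⟪grad x, w⟫, minimized at x
  set φ : E → ℝ := fun w => f w - ⟪grad x, w⟫ with hφ
  set G : E → E := fun w => grad w - grad x with hG
  have hφdiff : ∀ w, HasFDerivAt φ (InnerProductSpace.toDualMap ℝ E (G w)) w := by
    intro w
    have h1 : HasFDerivAt (fun w : E => ⟪grad x, w⟫)
        (InnerProductSpace.toDualMap ℝ E (grad x)) w :=
      (InnerProductSpace.toDualMap ℝ E (grad x)).hasFDerivAt
    have := (hdiff w).sub h1
    have heq : (InnerProductSpace.toDualMap ℝ E (grad w)) -
        (InnerProductSpace.toDualMap ℝ E (grad x))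
        = InnerProductSpace.toDualMap ℝ E (G w) := by
      ext u; simp [hG, inner_sub_left]
    rwa [heq] at this
  have hφlip : ∀ a b, ‖G a - G b‖ ≤ L * ‖a - b‖ := by
    intro a b
    have : G a - G b = grad a - grad b := by simp only [hG]; abel
    rw [this]; exact hlip a b
  -- min of φ at x via convexity of f
  have hmin : ∀ w, φ x ≤ φ w := by
    intro w
    have := grad_ineq f grad hf hdiff x w
    simp only [hφ, inner_sub_right] at *
    linarith [this]
  -- descent for φ at y with step -(1/L) G y
  have hdesc := descent_lemma φ G L hL hφdiff hφlip y (y - (1/L) • G y)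
  have h1 : (y - (1/L) • G y) - y = -((1/L) • G y) := by abel
  rw [h1] at hdesc
  have h2 : ⟪G y, -((1/L) • G y)⟫ = -(1/L) * ‖G y‖ ^ 2 := by
    rw [inner_neg_right, real_inner_smul_right, real_inner_self_eq_norm_sq]
    ring
  have h3 : ‖-((1/L) • G y)‖ ^ 2 = (1/L)^2 * ‖G y‖ ^ 2 := by
    rw [norm_neg, norm_smul, Real.norm_eq_abs, abs_of_nonneg (by positivity : (0:ℝ) ≤ 1/L)]
    try ring
  rw [h2, h3] at hdesc
  have hstep : φ (y - (1/L) • G y) ≤ φ y - 1/(2*L) * ‖G y‖ ^ 2 := by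
    have hL' : L ≠ 0 := hL.ne'
    calc φ (y - (1/L) • G y) ≤ φ y + -(1/L) * ‖G y‖^2 + L/2 * ((1/L)^2 * ‖G y‖^2) := hdesc
      _ = φ y - 1/(2*L) * ‖G y‖ ^ 2 := by field_simp; ring
  have := (hmin (y - (1/L) • G y)).trans hstep
  simp only [hφ, hG] at this ⊢
  have hex : ⟪grad x, y - x⟫ = ⟪grad x, y⟫ - ⟪grad x, x⟫ := by rw [inner_sub_right]
  linarith [this, hex.le]

end Aux

/-- **Suboptimality bound for the composite objective along TOS points.** With
`F = f + g + h`, where `f` is convex with `L_f`-Lipschitz gradient, `g` is convex, and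
`h` is convex with `L_h`-Lipschitz gradient, for all `x_A, x_B, x*` and every subgradient
`p_g` of `g` at `x_B`:
`F(x_B) − F(x*) ≤ ⟪∇f(x_A) + p_g + ∇h(x_B), x_B − x*⟫ + (L_f/2)‖x_B − x_A‖²
  − (1/(2L_h))‖∇h(x_B) − ∇h(x*)‖²`. -/
theorem composite_suboptimality_bound
    {E : Type*} [NormedAddCommGroup E] [InnerProductSpace ℝ E]
    (L_f L_h : ℝ) (hLf : 0 < L_f) (hLh : 0 < L_h)
    (f g h : E → ℝ) (fgrad hgrad : E → E)
    (hf : ConvexOn ℝ Set.univ f)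
    (hfdiff : ∀ x, HasFDerivAt f (InnerProductSpace.toDualMap ℝ E (fgrad x)) x)
    (hflip : ∀ x y, ‖fgrad x - fgrad y‖ ≤ L_f * ‖x - y‖)
    (hg : ConvexOn ℝ Set.univ g)
    (hh : ConvexOn ℝ Set.univ h)
    (hhdiff : ∀ x, HasFDerivAt h (InnerProductSpace.toDualMap ℝ E (hgrad x)) x)
    (hhlip : ∀ x y, ‖hgrad x - hgrad y‖ ≤ L_h * ‖x - y‖) :
    ∀ (xA xB xs pg : E), (∀ w, g xB + ⟪pg, w - xB⟫ ≤ g w) →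
      (f xB + g xB + h xB) - (f xs + g xs + h xs) ≤
        ⟪fgrad xA + pg + hgrad xB, xB - xs⟫ + L_f / 2 * ‖xB - xA‖ ^ 2
          - 1 / (2 * L_h) * ‖hgrad xB - hgrad xs‖ ^ 2 := by
  intro xA xB xs pg hpg
  -- f part
  have hf1 : f xB ≤ f xA + ⟪fgrad xA, xB - xA⟫ + L_f / 2 * ‖xB - xA‖ ^ 2 :=
    descent_lemma f fgrad L_f hLf hfdiff hflip xA xB
  have hf2 : f xA + ⟪fgrad xA, xs - xA⟫ ≤ f xs := grad_ineq f fgrad hf hfdiff xA xs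
  -- g part
  have hg1 : g xB + ⟪pg, xs - xB⟫ ≤ g xs := hpg xs
  -- h part: cocoercivity with roles swapped
  have hh1 : h xB + ⟪hgrad xB, xs - xB⟫ + 1 / (2 * L_h) * ‖hgrad xs - hgrad xB‖ ^ 2 ≤ h xs :=
    cocoercive_lower h hgrad L_h hLh hh hhdiff hhlip xB xs
  -- rearrange inner products
  have e1 : ⟪fgrad xA + pg + hgrad xB, xB - xs⟫
      = ⟪fgrad xA, xB - xs⟫ + ⟪pg, xB - xs⟫ + ⟪hgrad xB, xB - xs⟫ := by
    rw [inner_add_left, inner_add_left]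
  have e2 : ⟪fgrad xA, xB - xA⟫ - ⟪fgrad xA, xs - xA⟫ = ⟪fgrad xA, xB - xs⟫ := by
    rw [← inner_sub_right]; congr 1; abel
  have e3 : ⟪pg, xs - xB⟫ = -⟪pg, xB - xs⟫ := by
    rw [← inner_neg_right]; congr 1; abel
  have e4 : ⟪hgrad xB, xs - xB⟫ = -⟪hgrad xB, xB - xs⟫ := by
    rw [← inner_neg_right]; congr 1; abel
  have e5 : ‖hgrad xs - hgrad xB‖ = ‖hgrad xB - hgrad xs‖ := norm_sub_rev _ _
  rw [e3] at hg1
  rw [e4, e5] at hh1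
  linarith [hf1, hf2, hg1, hh1, e1, e2]
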